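/- Let k, n ∈ ℕ with n ≥ 1, let ζ ∈ ℂ be a primitive n-th root of unity, and let ñ = n if n is odd and ñ = n/2 if n is even. Then a matrix X : Matrix I_k I_k ℂ commutes with D(k,ζ) if and only if X r s = 0 for all r, s : I_k with |r| ≢ |s| (mod ñ). Consequently, the matrix units E_{r,s} (the matrix with 1 in position (r,s) and 0 elsewhere) taken over all pairs r, s with |r| ≡ |s| (mod ñ) form a ℂ-basis of the centralizer algebra Z_k(C_n) = {X : X·D(k,ζ) = D(k,ζ)·X}. -/

import Mathlib

open Matrix

/-- The number of `-1` factors (encoded as `true`) in a simple tensor index. -/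
def wt {k : ℕ} (r : Fin k → Bool) : ℕ := (Finset.univ.filter fun i => r i = true).card

/-- The matrix of `g^{⊗k}` on `V^{⊗k}` for `g = diag(ζ⁻¹, ζ)`. -/
noncomputable def Dmat (k : ℕ) (ζ : ℂ) : Matrix (Fin k → Bool) (Fin k → Bool) ℂ :=
  Matrix.diagonal fun r => ζ ^ ((k : ℤ) - 2 * (wt r : ℤ))

/-- `ñ = n` if `n` is odd, `n/2` if `n` is even. -/
def ntil (n : ℕ) : ℕ := if n % 2 = 0 then n / 2 else n

/-- The centralizer of a matrix `M`, as a submodule of the matrix algebra. -/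
noncomputable def commSub {I : Type*} [Fintype I] [DecidableEq I] (M : Matrix I I ℂ) :
    Submodule ℂ (Matrix I I ℂ) where
  carrier := {X | X * M = M * X}
  add_mem' := by
    intro a b ha hb
    simp only [Set.mem_setOf_eq] at *
    rw [add_mul, mul_add, ha, hb]
  zero_mem' := by simp
  smul_mem' := by
    intro c X hX
    simp only [Set.mem_setOf_eq] at *
    rw [smul_mul_assoc, mul_smul_comm, hX]

lemma nat_dvd_two_mul (n m : ℕ) (hn : 1 ≤ n) : n ∣ 2 * m ↔ ntil n ∣ m := by
  unfold ntil
  by_cases h : n % 2 = 0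
  · rw [if_pos h]
    have h2 : 2 * (n / 2) = n := Nat.two_mul_div_two_of_even (Nat.even_iff.mpr h)
    conv_lhs => rw [← h2]
    exact Nat.mul_dvd_mul_iff_left (by norm_num)
  · rw [if_neg h]
    have hco : Nat.Coprime n 2 :=
      Nat.coprime_two_right.mpr (Nat.odd_iff.mpr (by omega))
    constructor
    · intro hd
      exact hco.dvd_of_dvd_mul_left hd
    · intro hd
      exact hd.mul_left 2

lemma int_dvd_two_mul (n : ℕ) (hn : 1 ≤ n) (d : ℤ) : (n : ℤ) ∣ 2 * d ↔ (ntil n : ℤ) ∣ d := by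
  rw [← Int.natAbs_dvd_natAbs, ← Int.natAbs_dvd_natAbs]
  simp only [Int.natAbs_mul, Int.natAbs_natCast]
  exact nat_dvd_two_mul n d.natAbs hn

lemma dentry_eq_iff (k n : ℕ) (hn : 1 ≤ n) (ζ : ℂ) (hζ : IsPrimitiveRoot ζ n)
    (r s : Fin k → Bool) :
    ζ ^ ((k : ℤ) - 2 * (wt r : ℤ)) = ζ ^ ((k : ℤ) - 2 * (wt s : ℤ)) ↔
      wt r ≡ wt s [MOD ntil n] := by
  have hζ0 : ζ ≠ 0 := hζ.ne_zero (by omega)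
  have key : ∀ a b : ℤ, ζ ^ a = ζ ^ b ↔ ζ ^ (a - b) = 1 := by
    intro a b
    rw [zpow_sub₀ hζ0, div_eq_one_iff_eq (zpow_ne_zero _ hζ0)]
  rw [key, hζ.zpow_eq_one_iff_dvd]
  have : ((k : ℤ) - 2 * (wt r : ℤ)) - ((k : ℤ) - 2 * (wt s : ℤ)) = 2 * ((wt s : ℤ) - wt r) := by
    ring
  rw [this, int_dvd_two_mul n hn, Nat.modEq_iff_dvd]

theorem stmt0 (k n : ℕ) (hn : 1 ≤ n) (ζ : ℂ) (hζ : IsPrimitiveRoot ζ n) :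
    (∀ X : Matrix (Fin k → Bool) (Fin k → Bool) ℂ,
      X * Dmat k ζ = Dmat k ζ * X ↔
        ∀ r s : Fin k → Bool, ¬ (wt r ≡ wt s [MOD ntil n]) → X r s = 0) ∧
    ∃ b : Module.Basis {p : (Fin k → Bool) × (Fin k → Bool) // wt p.1 ≡ wt p.2 [MOD ntil n]}
        ℂ (commSub (Dmat k ζ)),
      ∀ p, (b p : Matrix (Fin k → Bool) (Fin k → Bool) ℂ)
            = Matrix.single p.1.1 p.1.2 1 := by
  set d : (Fin k → Bool) → ℂ := fun r => ζ ^ ((k : ℤ) - 2 * (wt r : ℤ)) with hd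
  have main : ∀ X : Matrix (Fin k → Bool) (Fin k → Bool) ℂ,
      X * Dmat k ζ = Dmat k ζ * X ↔
        ∀ r s : Fin k → Bool, ¬ (wt r ≡ wt s [MOD ntil n]) → X r s = 0 := by
    intro X
    constructor
    · intro hX r s hrs
      have h1 : X r s * d s = d r * X r s := by
        have := congrFun (congrFun hX r) s
        simpa [Dmat, Matrix.mul_diagonal, Matrix.diagonal_mul] using this
      have hne : d r ≠ d s := fun h => hrs ((dentry_eq_iff k n hn ζ hζ r s).mp h)
      have h2 : X r s * (d s - d r) = 0 := by
        rw [mul_sub, h1, mul_comm, sub_self]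
      rcases mul_eq_zero.mp h2 with h | h
      · exact h
      · exact absurd (sub_eq_zero.mp h).symm hne
    · intro hX
      ext r s
      rw [Dmat, Matrix.mul_diagonal, Matrix.diagonal_mul]
      show X r s * d s = d r * X r s
      by_cases hrs : wt r ≡ wt s [MOD ntil n]
      · rw [show d r = d s from (dentry_eq_iff k n hn ζ hζ r s).mpr hrs, mul_comm]
      · rw [hX r s hrs, zero_mul, mul_zero]
  refine ⟨main, ?_⟩
  set ι := {p : (Fin k → Bool) × (Fin k → Bool) // wt p.1 ≡ wt p.2 [MOD ntil n]} with hι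
  have mem_inv : ∀ c : ι → ℂ,
      (Matrix.of fun r s => if h : wt r ≡ wt s [MOD ntil n] then c ⟨(r, s), h⟩ else 0)
        ∈ commSub (Dmat k ζ) := by
    intro c
    refine (main _).mpr ?_
    intro r s hrs
    simp only [Matrix.of_apply, dif_neg hrs]
  let e : commSub (Dmat k ζ) ≃ₗ[ℂ] (ι → ℂ) :=
    { toFun := fun X p => (X : Matrix (Fin k → Bool) (Fin k → Bool) ℂ) p.1.1 p.1.2
      map_add' := fun X Y => rfl
      map_smul' := fun c X => rfl
      invFun := fun c => ⟨Matrix.of fun r s =>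
        if h : wt r ≡ wt s [MOD ntil n] then c ⟨(r, s), h⟩ else 0, mem_inv c⟩
      left_inv := by
        intro X
        ext r s
        by_cases hrs : wt r ≡ wt s [MOD ntil n]
        · simp only [Matrix.of_apply, dif_pos hrs]
        · simp only [Matrix.of_apply, dif_neg hrs]
          exact ((main _).mp X.2 r s hrs).symm
      right_inv := by
        intro c
        funext p
        simp only [Matrix.of_apply, dif_pos p.2]; rfl }
  refine ⟨Module.Basis.ofEquivFun e, ?_⟩
  intro p
  rw [Module.Basis.coe_ofEquivFun]
  ext r s
  show (if h : wt r ≡ wt s [MOD ntil n]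
      then Function.update (0 : ι → ℂ) p 1 ⟨(r, s), h⟩ else 0)
    = Matrix.single p.1.1 p.1.2 1 r s
  by_cases hp : r = p.1.1 ∧ s = p.1.2
  · have hc : wt r ≡ wt s [MOD ntil n] := by rw [hp.1, hp.2]; exact p.2
    rw [dif_pos hc]
    have hpe : (⟨(r, s), hc⟩ : ι) = p := Subtype.ext (by rw [Prod.ext_iff]; exact ⟨hp.1, hp.2⟩)
    rw [hpe, Function.update_self, Matrix.single, Matrix.of_apply,
      if_pos ⟨hp.1.symm, hp.2.symm⟩]
  · rw [Matrix.single, Matrix.of_apply, if_neg (by tauto)]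
    by_cases hc : wt r ≡ wt s [MOD ntil n]
    · rw [dif_pos hc, Function.update_of_ne, Pi.zero_apply]
      intro he
      apply hp
      have : (r, s) = p.1 := congrArg Subtype.val he
      exact ⟨congrArg Prod.fst this, congrArg Prod.snd this⟩
    · rw [dif_neg hc]
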